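/- Normalized generalized packing invariant. Let m ≥ 1, ε > 0, and α = e^{4ε} − 1. Let x_1, …, x_s ∈ P where 0 ≤ f_j(x) ≤ 1 for all x ∈ P and j ∈ {1,…,m}. Define Y_j(t) = ∏_{ℓ=1}^t (1 + α f_j(x_ℓ)) for 0 ≤ t ≤ s, the dual values v_t = (Σ_{j=1}^m Y_j(t−1) f_j(x_t)) / (Σ_{j=1}^m Y_j(t−1)) for 1 ≤ t ≤ s, their average v̄ = (1/s) Σ_{t=1}^s v_t, and λ̄ = max_j (1/s) Σ_{ℓ=1}^s f_j(x_ℓ). Then (1+α)^{s·λ̄} ≤ (1+α)^{s(v̄+ε)} · m / exp(2sε²). -/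

import Mathlib

open Real

lemma log_ge_two_mul {t : ℝ} (ht : 1 ≤ t) : 2 * (t - 1) / (t + 1) ≤ Real.log t := by
  set g : ℝ → ℝ := fun u => Real.log u + 4 * (u + 1)⁻¹ with hg
  have hder : ∀ u : ℝ, 0 < u → HasDerivAt g (u⁻¹ + 4 * (-1 / (u + 1) ^ 2)) u := by
    intro u hu
    have h1 : HasDerivAt (fun u : ℝ => (u + 1)⁻¹) (-1 / (u + 1) ^ 2) u := by
      have := ((hasDerivAt_id u).add_const 1).inv (by positivity)
      simpa [Pi.inv_def] using this
    exact (Real.hasDerivAt_log (ne_of_gt hu)).add (h1.const_mul 4)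
  have key : MonotoneOn g (Set.Ici 1) := by
    apply monotoneOn_of_deriv_nonneg (convex_Ici 1)
    · intro u hu
      simp only [Set.mem_Ici] at hu
      exact ((hder u (by linarith)).continuousAt).continuousWithinAt
    · intro u hu
      rw [interior_Ici] at hu
      simp only [Set.mem_Ioi] at hu
      exact ((hder u (by linarith)).differentiableAt).differentiableWithinAt
    · intro u hu
      rw [interior_Ici] at hu
      simp only [Set.mem_Ioi] at hu
      rw [(hder u (by linarith)).deriv]
      have h2 : (0:ℝ) < u := by linarith
      have h3 : (0:ℝ) < (u + 1) ^ 2 := by positivity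
      have : u⁻¹ + 4 * (-1 / (u + 1) ^ 2) = (u - 1)^2 / (u * (u+1)^2) := by
        field_simp; ring
      rw [this]; positivity
  have h0 : g 1 ≤ g t := key (by simp) ht (by exact ht)
  have hg1 : g 1 = 2 := by norm_num [hg]
  have ht1 : (0:ℝ) < t + 1 := by linarith
  rw [hg1] at h0
  simp only [hg] at h0
  rw [div_le_iff₀ ht1]
  have h4 : 4 * (t+1)⁻¹ = 4 / (t+1) := by ring
  rw [h4, ← sub_nonneg] at h0
  have h5 : Real.log t + 4/(t+1) - 2 = (Real.log t * (t+1) - 2*(t-1))/(t+1) := by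
    field_simp; ring
  rw [h5, le_div_iff₀ ht1] at h0
  linarith

lemma core {v a : ℝ} (hv0 : 0 ≤ v) (hv1 : v ≤ 1) (ha : 0 ≤ a) :
    v * Real.exp a ≤ (v + a / 4) * ((1 - v) + v * Real.exp a) := by
  set b := a / 4 with hb
  have hb0 : 0 ≤ b := by positivity
  have hea : (1:ℝ) ≤ Real.exp a := by
    rw [← Real.exp_zero]; exact Real.exp_le_exp.2 ha
  -- reduce to (1-v)(v+b) ≥ v e^a (1-v-b)
  have suff : v * Real.exp a * (1 - v - b) ≤ (1 - v) * (v + b) →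
      v * Real.exp a ≤ (v + b) * ((1 - v) + v * Real.exp a) := by
    intro h; nlinarith [mul_nonneg hv0 (Real.exp_nonneg a)]
  apply suff
  rcases le_or_gt (1 - v - b) 0 with h | h
  · have h1 : v * Real.exp a * (1 - v - b) ≤ 0 :=
      mul_nonpos_of_nonneg_of_nonpos (by positivity) h
    have h2 : (0:ℝ) ≤ (1 - v) * (v + b) := by nlinarith
    linarith
  · rcases eq_or_lt_of_le hv0 with hv | hv
    · simp [← hv]; nlinarith
    -- v > 0, 1 - v - b > 0
    have hvb : 0 < v + b := by linarith
    have h1v : 0 < 1 - v := by linarith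
    have key : a ≤ Real.log ((v + b) / v) + Real.log ((1 - v) / (1 - v - b)) := by
      have l1 : 2 * b / (2 * v + b) ≤ Real.log ((v + b) / v) := by
        have ht : (1:ℝ) ≤ (v + b) / v := by
          rw [le_div_iff₀ hv]; linarith
        have := log_ge_two_mul ht
        have hu : (0:ℝ) < 2 * v + b := by linarith
        have hd : (0:ℝ) < (v + b) / v + 1 := by linarith
        have he : 2 * ((v + b) / v - 1) / ((v + b) / v + 1) = 2 * b / (2 * v + b) := by
          rw [div_eq_div_iff hd.ne' hu.ne']
          field_simp [hv.ne']
          ring_nf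
        rwa [he] at this
      have l2 : 2 * b / (2 - 2 * v - b) ≤ Real.log ((1 - v) / (1 - v - b)) := by
        have ht : (1:ℝ) ≤ (1 - v) / (1 - v - b) := by
          rw [le_div_iff₀ h]; linarith
        have := log_ge_two_mul ht
        have hw : (0:ℝ) < 2 - 2 * v - b := by linarith
        have hd : (0:ℝ) < (1 - v) / (1 - v - b) + 1 := by linarith
        have he : 2 * ((1 - v) / (1 - v - b) - 1) / ((1 - v) / (1 - v - b) + 1)
            = 2 * b / (2 - 2 * v - b) := by
          rw [div_eq_div_iff hd.ne' hw.ne']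
          field_simp [h.ne']
          ring_nf
        rwa [he] at this
      have hu : 0 < 2 * v + b := by linarith
      have hw : 0 < 2 - 2 * v - b := by linarith
      have hsum : 4 * b ≤ 2 * b / (2 * v + b) + 2 * b / (2 - 2 * v - b) := by
        rw [div_add_div _ _ (ne_of_gt hu) (ne_of_gt hw), le_div_iff₀ (by positivity)]
        nlinarith [sq_nonneg (2 * v + b - 1)]
      have : a = 4 * b := by rw [hb]; ring
      linarith
    have hexp : Real.exp a ≤ (v + b) / v * ((1 - v) / (1 - v - b)) := by
      calc Real.exp a ≤ Real.exp (Real.log ((v + b) / v) + Real.log ((1 - v) / (1 - v - b))) :=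
            Real.exp_le_exp.2 key
        _ = (v + b) / v * ((1 - v) / (1 - v - b)) := by
            rw [Real.exp_add, Real.exp_log (by positivity), Real.exp_log (by positivity)]
    have := mul_le_mul_of_nonneg_left hexp (le_of_lt (mul_pos hv h))
    calc v * Real.exp a * (1 - v - b) = v * (1 - v - b) * Real.exp a := by ring
      _ ≤ v * (1 - v - b) * ((v + b) / v * ((1 - v) / (1 - v - b))) := this
      _ = (1 - v) * (v + b) := by field_simp

lemma hoeffding_pt {v a : ℝ} (hv0 : 0 ≤ v) (hv1 : v ≤ 1) (ha : 0 ≤ a) :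
    (1 - v) + v * Real.exp a ≤ Real.exp (a * v + a ^ 2 / 8) := by
  set φ : ℝ → ℝ := fun u => u * v + u ^ 2 / 8 - Real.log ((1 - v) + v * Real.exp u) with hφ
  have hD : ∀ u : ℝ, 0 < (1 - v) + v * Real.exp u := by
    intro u
    rcases eq_or_lt_of_le hv1 with h | h
    · rw [h]; simpa using Real.exp_pos u
    · have : 0 ≤ v * Real.exp u := mul_nonneg hv0 (Real.exp_nonneg u)
      linarith
  have hder : ∀ u : ℝ, HasDerivAt φ
      (v + u / 4 - v * Real.exp u / ((1 - v) + v * Real.exp u)) u := by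
    intro u
    have h1 : HasDerivAt (fun u : ℝ => u * v) v u := by
      simpa using (hasDerivAt_id u).mul_const v
    have h2 : HasDerivAt (fun u : ℝ => u ^ 2 / 8) (u / 4) u := by
      have := (hasDerivAt_pow 2 u).div_const 8
      simpa using this.congr_deriv (by push_cast; ring)
    have h3 : HasDerivAt (fun u : ℝ => (1 - v) + v * Real.exp u) (v * Real.exp u) u :=
      ((Real.hasDerivAt_exp u).const_mul v).const_add (1 - v)
    have h4 := (h3.log (hD u).ne')
    exact (h1.add h2).sub h4
  have key : MonotoneOn φ (Set.Ici 0) := by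
    apply monotoneOn_of_deriv_nonneg (convex_Ici 0)
    · intro u _; exact (hder u).continuousAt.continuousWithinAt
    · intro u _; exact (hder u).differentiableAt.differentiableWithinAt
    · intro u hu
      rw [interior_Ici] at hu
      rw [(hder u).deriv]
      have hc := core hv0 hv1 (le_of_lt hu)
      rw [sub_nonneg, div_le_iff₀ (hD u)]
      calc v * Real.exp u ≤ (v + u / 4) * ((1 - v) + v * Real.exp u) := hc
        _ = (v + u / 4) * ((1 - v) + v * Real.exp u) := rfl
    
  have h0 : φ 0 ≤ φ a := key (by simp) (by simpa using ha) ha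
  have hφ0 : φ 0 = 0 := by simp [hφ]
  rw [hφ0] at h0
  simp only [hφ] at h0
  have hlog : Real.log ((1 - v) + v * Real.exp a) ≤ a * v + a ^ 2 / 8 := by linarith
  calc (1 - v) + v * Real.exp a = Real.exp (Real.log ((1 - v) + v * Real.exp a)) :=
        (Real.exp_log (hD a)).symm
    _ ≤ Real.exp (a * v + a ^ 2 / 8) := Real.exp_le_exp.2 hlog

lemma exp_interp {c a : ℝ} (hc0 : 0 ≤ c) (hc1 : c ≤ 1) :
    Real.exp (a * c) ≤ 1 + (Real.exp a - 1) * c := by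
  have h := convexOn_exp.2 (Set.mem_univ (0:ℝ)) (Set.mem_univ a)
    (by linarith : (0:ℝ) ≤ 1 - c) hc0 (by ring)
  simp only [smul_eq_mul, mul_zero, zero_add, Real.exp_zero, mul_one] at h
  rw [mul_comm c a] at h
  nlinarith [h]

/-- **Generalized packing invariant** (normalized, Lemma 5 of the paper).
With multiplicative weights `Y t j = ∏_{ℓ<t} (1 + α·f (x ℓ) j)`,
`α = e^{4ε} − 1`, dual values
`v t = (Σ_j Y t j · f (x t) j) / (Σ_j Y t j)`, their average `vbar`, and
primal value `lambar = max_j (1/s)·Σ_{ℓ<s} f (x ℓ) j`, one has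
`(1+α)^{s·lambar} ≤ (1+α)^{s·(vbar+ε)} · m / e^{2sε²}`. -/
theorem generalized_packing_invariant (n m s : ℕ) (hm : 1 ≤ m)
    (ε α : ℝ) (hε : 0 < ε) (hα : α = Real.exp (4 * ε) - 1)
    (P : Set (Fin n → ℝ)) (f : (Fin n → ℝ) → Fin m → ℝ)
    (hf : ∀ x ∈ P, ∀ j, f x j ∈ Set.Icc (0 : ℝ) 1)
    (x : ℕ → Fin n → ℝ) (hx : ∀ ℓ < s, x ℓ ∈ P)
    (Y : ℕ → Fin m → ℝ)
    (hY : ∀ t, ∀ j, Y t j = ∏ ℓ ∈ Finset.range t, (1 + α * f (x ℓ) j))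
    (v : ℕ → ℝ)
    (hv : ∀ t < s, v t = (∑ j, Y t j * f (x t) j) / (∑ j, Y t j))
    (vbar lambar : ℝ)
    (hvbar : vbar = (1 / (s : ℝ)) * ∑ t ∈ Finset.range s, v t)
    (hlambar : lambar = ⨆ j, (1 / (s : ℝ)) * ∑ ℓ ∈ Finset.range s, f (x ℓ) j) :
    (1 + α) ^ ((s : ℝ) * lambar)
      ≤ (1 + α) ^ ((s : ℝ) * (vbar + ε)) * m / Real.exp (2 * s * ε ^ 2) := by
  have hA : (1:ℝ) + α = Real.exp (4 * ε) := by rw [hα]; ring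
  have hApos : (0:ℝ) < 1 + α := hA ▸ Real.exp_pos _
  have hαpos : 0 < α := by
    rw [hα]
    have : (1:ℝ) < Real.exp (4 * ε) := by
      rw [show (1:ℝ) = Real.exp 0 by simp]
      exact Real.exp_lt_exp.2 (by linarith)
    linarith
  have hrpow : ∀ y : ℝ, (1 + α) ^ y = Real.exp (4 * ε * y) := by
    intro y
    rw [Real.rpow_def_of_pos hApos, hA, Real.log_exp]
  haveI : Nonempty (Fin m) := Fin.pos_iff_nonempty.mp (by omega)
  rcases Nat.eq_zero_or_pos s with hs | hs
  · subst hs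
    have hvbar0 : vbar = 0 := by simp [hvbar]
    have hlam0 : lambar = 0 := by simp [hlambar]
    simp only [hvbar0, hlam0, Nat.cast_zero, zero_mul, mul_zero, Real.rpow_zero,
      Real.exp_zero, div_one, one_mul]
    exact_mod_cast hm
  have hspos : (0:ℝ) < s := Nat.cast_pos.mpr hs
  have hfx : ∀ ℓ < s, ∀ j, 0 ≤ f (x ℓ) j ∧ f (x ℓ) j ≤ 1 := by
    intro ℓ hl j
    exact ⟨(hf _ (hx ℓ hl) j).1, (hf _ (hx ℓ hl) j).2⟩
  have hYpos : ∀ t, t ≤ s → ∀ j, 0 < Y t j := by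
    intro t ht j
    rw [hY]
    apply Finset.prod_pos
    intro ℓ hℓ
    have h1 := (hfx ℓ (lt_of_lt_of_le (Finset.mem_range.mp hℓ) ht) j).1
    nlinarith [hαpos]
  set S : ℕ → ℝ := fun t => ∑ j, Y t j with hS
  have hSpos : ∀ t, t ≤ s → 0 < S t := by
    intro t ht
    exact Finset.sum_pos (fun j _ => hYpos t ht j) Finset.univ_nonempty
  have hrec : ∀ t, t < s → S (t + 1) = S t * (1 + α * v t) := by
    intro t ht
    have hnum : ∑ j, Y t j * f (x t) j = v t * S t := by
      rw [hv t ht]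
      field_simp [(hSpos t (le_of_lt ht)).ne']
      exact (mul_div_cancel_right₀ _ (hSpos t (le_of_lt ht)).ne').symm
    calc S (t + 1) = ∑ j, Y t j * (1 + α * f (x t) j) := by
          apply Finset.sum_congr rfl
          intro j _
          rw [hY (t + 1) j, hY t j, Finset.prod_range_succ]
      _ = ∑ j, (Y t j + α * (Y t j * f (x t) j)) := by
          apply Finset.sum_congr rfl; intro j _; ring
      _ = S t + α * ∑ j, Y t j * f (x t) j := by
          rw [Finset.sum_add_distrib, ← Finset.mul_sum]
      _ = S t * (1 + α * v t) := by rw [hnum]; ring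
  have hSs : S s = m * ∏ t ∈ Finset.range s, (1 + α * v t) := by
    have key : ∀ t, t ≤ s → S t = m * ∏ ℓ ∈ Finset.range t, (1 + α * v ℓ) := by
      intro t
      induction t with
      | zero => intro _; simp [hS, hY]
      | succ t ih =>
        intro ht
        rw [hrec t (by omega), ih (by omega), Finset.prod_range_succ]
        ring
    exact key s le_rfl
  have hvb : ∀ t, t < s → 0 ≤ v t ∧ v t ≤ 1 := by
    intro t ht
    have hSt := hSpos t (le_of_lt ht)
    have hnum0 : 0 ≤ ∑ j, Y t j * f (x t) j :=
      Finset.sum_nonneg fun j _ => mul_nonneg (hYpos t ht.le j).le (hfx t ht j).1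
    have hnum1 : ∑ j, Y t j * f (x t) j ≤ S t := by
      apply Finset.sum_le_sum
      intro j _
      nlinarith [hYpos t ht.le j, (hfx t ht j).2]
    rw [hv t ht]
    exact ⟨div_nonneg hnum0 hSt.le, by rw [div_le_one hSt]; exact hnum1⟩
  have hhoef : ∀ t, t < s → 1 + α * v t ≤ Real.exp (4 * ε * v t + 2 * ε ^ 2) := by
    intro t ht
    obtain ⟨h0, h1⟩ := hvb t ht
    have hh := hoeffding_pt h0 h1 (by positivity : (0:ℝ) ≤ 4 * ε)
    have he : (1 - v t) + v t * Real.exp (4 * ε) = 1 + α * v t := by rw [hα]; ring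
    have he2 : (4 * ε) * v t + (4 * ε) ^ 2 / 8 = 4 * ε * v t + 2 * ε ^ 2 := by ring
    rw [he, he2] at hh
    exact hh
  obtain ⟨j₀, hj₀⟩ := Finite.exists_max
    (fun j : Fin m => (1 / (s : ℝ)) * ∑ ℓ ∈ Finset.range s, f (x ℓ) j)
  have hlam : lambar = (1 / (s : ℝ)) * ∑ ℓ ∈ Finset.range s, f (x ℓ) j₀ := by
    rw [hlambar]
    exact le_antisymm (ciSup_le hj₀)
      (le_ciSup (f := fun j : Fin m => (1 / (s : ℝ)) * ∑ ℓ ∈ Finset.range s, f (x ℓ) j)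
        (Set.Finite.bddAbove (Set.finite_range _)) j₀)
  have hstepA : (1 + α) ^ ((s : ℝ) * lambar) ≤ Y s j₀ := by
    have hsl : (s : ℝ) * lambar = ∑ ℓ ∈ Finset.range s, f (x ℓ) j₀ := by
      rw [hlam]
      field_simp
    rw [hsl, hrpow, Finset.mul_sum, Real.exp_sum, hY s j₀]
    apply Finset.prod_le_prod
    · intro ℓ _; positivity
    · intro ℓ hℓ
      have hmem := Finset.mem_range.mp hℓ
      calc Real.exp (4 * ε * f (x ℓ) j₀)
          ≤ 1 + (Real.exp (4 * ε) - 1) * f (x ℓ) j₀ :=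
            exp_interp (hfx ℓ hmem j₀).1 (hfx ℓ hmem j₀).2
        _ = 1 + α * f (x ℓ) j₀ := by rw [hα]
  have hY_le_S : Y s j₀ ≤ S s :=
    Finset.single_le_sum (fun j _ => (hYpos s le_rfl j).le) (Finset.mem_univ j₀)
  have hsv : ∑ t ∈ Finset.range s, v t = (s : ℝ) * vbar := by
    rw [hvbar]; field_simp
  have hprod : ∏ t ∈ Finset.range s, (1 + α * v t)
      ≤ Real.exp (4 * ε * ((s : ℝ) * vbar) + 2 * s * ε ^ 2) := by
    calc ∏ t ∈ Finset.range s, (1 + α * v t)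
        ≤ ∏ t ∈ Finset.range s, Real.exp (4 * ε * v t + 2 * ε ^ 2) := by
          apply Finset.prod_le_prod
          · intro t ht'
            have := (hvb t (Finset.mem_range.mp ht')).1
            nlinarith [hαpos]
          · intro t ht'; exact hhoef t (Finset.mem_range.mp ht')
      _ = Real.exp (∑ t ∈ Finset.range s, (4 * ε * v t + 2 * ε ^ 2)) := (Real.exp_sum _ _).symm
      _ = Real.exp (4 * ε * ((s : ℝ) * vbar) + 2 * s * ε ^ 2) := by
          rw [Finset.sum_add_distrib, ← Finset.mul_sum, Finset.sum_const, Finset.card_range,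
            hsv, nsmul_eq_mul]
          ring_nf
  have hRHS : (1 + α) ^ ((s : ℝ) * (vbar + ε)) * m / Real.exp (2 * s * ε ^ 2)
      = m * Real.exp (4 * ε * ((s : ℝ) * vbar) + 2 * s * ε ^ 2) := by
    rw [hrpow, mul_comm, mul_div_assoc, ← Real.exp_sub]
    congr 1
    ring
  rw [hRHS]
  calc (1 + α) ^ ((s : ℝ) * lambar) ≤ Y s j₀ := hstepA
    _ ≤ S s := hY_le_S
    _ = m * ∏ t ∈ Finset.range s, (1 + α * v t) := hSs
    _ ≤ m * Real.exp (4 * ε * ((s : ℝ) * vbar) + 2 * s * ε ^ 2) := by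
        apply mul_le_mul_of_nonneg_left hprod (by positivity)
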